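/- The cube-connected cycles graph CCC_n is distance-balanced for all n ≥ 3. -/

import Mathlib

/-- The cube-connected cycles graph `CCC n`: vertices are pairs of a binary
`n`-string and a cycle digit in `ZMod n`; `(x,k)` and `(y,m)` are adjacent iff
either `x = y` and `m = k ± 1` (cycle edge), or `k = m` and `x, y` differ
exactly in the `k`-th coordinate (cube edge). -/
def CCC (n : ℕ) : SimpleGraph ((Fin n → Bool) × ZMod n) :=
  SimpleGraph.fromRel (fun p q =>
    (p.1 = q.1 ∧ (q.2 = p.2 + 1 ∨ q.2 = p.2 - 1)) ∨
    (p.2 = q.2 ∧ ∀ i : Fin n, (p.1 i ≠ q.1 i ↔ ((i : ℕ) : ZMod n) = p.2)))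

private lemma xor_ne_xor (a b c : Bool) : xor a c ≠ xor b c ↔ a ≠ b := by
  cases a <;> cases b <;> cases c <;> simp

private lemma xor_xor_cancel (a b : Bool) : xor (xor a b) b = a := by
  cases a <;> cases b <;> rfl

private lemma ccc_xor_cancel_left (a b : Bool) : xor a (xor b a) = b := by
  cases a <;> cases b <;> rfl

private lemma edist_map_le {V : Type*} {G : SimpleGraph V} (f : V → V)
    (hf : ∀ a b, G.Adj a b → G.Adj (f a) (f b)) (u v : V) :
    G.edist (f u) (f v) ≤ G.edist u v := by
  conv_rhs => rw [SimpleGraph.edist_eq_sInf]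
  refine le_sInf ?_
  rintro _ ⟨p, rfl⟩
  simpa using SimpleGraph.edist_le (p.map ⟨f, fun {a b} h => hf a b h⟩)

private lemma card_key {V : Type*} (G : SimpleGraph V) (ψ : V ≃ V)
    (hψ : ∀ p q, G.Adj p q → G.Adj (ψ p) (ψ q)) (hinv : ∀ z, ψ (ψ z) = z)
    (u v : V) (hu : ψ u = v) :
    Nat.card {z | G.dist z u < G.dist z v} = Nat.card {z | G.dist z v < G.dist z u} := by
  have hed : ∀ z w, G.edist (ψ z) (ψ w) = G.edist z w := by
    intro z w
    refine le_antisymm (edist_map_le ψ hψ z w) ?_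
    have := edist_map_le ψ hψ (ψ z) (ψ w)
    rwa [hinv, hinv] at this
  have hdist : ∀ z w, G.dist (ψ z) (ψ w) = G.dist z w := by
    intro z w; simp only [SimpleGraph.dist, hed]
  have hv : ψ v = u := by rw [← hu, hinv]
  refine Nat.card_congr (ψ.subtypeEquiv fun z => ?_)
  simp only [Set.mem_setOf_eq]
  rw [show G.dist (ψ z) v = G.dist z u by rw [← hu, hdist],
      show G.dist (ψ z) u = G.dist z v by rw [← hv, hdist]]

/-- CCC_n is distance-balanced for all n ≥ 3. -/
theorem CCC_distanceBalanced (n : ℕ) (hn : 3 ≤ n)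
    (u v : (Fin n → Bool) × ZMod n) (huv : (CCC n).Adj u v) :
    Nat.card {z : (Fin n → Bool) × ZMod n | (CCC n).dist z u < (CCC n).dist z v}
      = Nat.card {z : (Fin n → Bool) × ZMod n | (CCC n).dist z v < (CCC n).dist z u} := by
  haveI : NeZero n := ⟨by omega⟩
  rw [CCC, SimpleGraph.fromRel_adj] at huv
  obtain ⟨hne, h⟩ := huv
  have hcase : u.1 = v.1 ∨ u.2 = v.2 := by
    rcases h with (⟨h1, _⟩ | ⟨h1, _⟩) | (⟨h1, _⟩ | ⟨h1, _⟩)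
    · exact Or.inl h1
    · exact Or.inr h1
    · exact Or.inl h1.symm
    · exact Or.inr h1.symm
  rcases hcase with h1 | h2
  · -- cycle edge: u.1 = v.1, use reflection automorphism
    set s : ZMod n := u.2 + v.2 with hs
    set σ : Fin n → Fin n := fun i => ⟨(s - ((i : ℕ) : ZMod n)).val, ZMod.val_lt _⟩ with hσdef
    have hσcast : ∀ i : Fin n, (((σ i : Fin n) : ℕ) : ZMod n) = s - ((i : ℕ) : ZMod n) := by
      intro i
      exact ZMod.natCast_zmod_val _
    have hσσ : ∀ i, σ (σ i) = i := by
      intro i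
      have h2 : s - (((σ i : Fin n) : ℕ) : ZMod n) = ((i : ℕ) : ZMod n) := by
        rw [hσcast]; ring
      apply Fin.ext
      show (s - (((σ i : Fin n) : ℕ) : ZMod n)).val = (i : ℕ)
      rw [h2, ZMod.val_cast_of_lt i.isLt]
    set c : Fin n → Bool := fun i => xor (u.1 i) (u.1 (σ i)) with hc
    have hcσ : ∀ i, c (σ i) = c i := by
      intro i
      show xor (u.1 (σ i)) (u.1 (σ (σ i))) = xor (u.1 i) (u.1 (σ i))
      rw [hσσ i, Bool.xor_comm]
    set ψf : (Fin n → Bool) × ZMod n → (Fin n → Bool) × ZMod n :=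
      fun z => (fun i => xor (z.1 (σ i)) (c i), s - z.2) with hψf
    have hinv : Function.Involutive ψf := by
      intro z
      show ((fun i => xor (xor (z.1 (σ (σ i))) (c (σ i))) (c i), s - (s - z.2)) : _) = z
      refine Prod.ext ?_ (by show s - (s - z.2) = z.2; ring)
      funext i
      show xor (xor (z.1 (σ (σ i))) (c (σ i))) (c i) = z.1 i
      rw [hσσ i, hcσ i, xor_xor_cancel]
    have hu : ψf u = v := by
      refine Prod.ext ?_ (by show s - u.2 = v.2; rw [hs]; ring)
      funext i
      show xor (u.1 (σ i)) (xor (u.1 i) (u.1 (σ i))) = v.1 i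
      rw [← h1]
      cases u.1 i <;> cases u.1 (σ i) <;> rfl
    have hrel : ∀ p q : (Fin n → Bool) × ZMod n,
        ((p.1 = q.1 ∧ (q.2 = p.2 + 1 ∨ q.2 = p.2 - 1)) ∨
          (p.2 = q.2 ∧ ∀ i : Fin n, (p.1 i ≠ q.1 i ↔ ((i : ℕ) : ZMod n) = p.2))) →
        (((ψf p).1 = (ψf q).1 ∧ ((ψf q).2 = (ψf p).2 + 1 ∨ (ψf q).2 = (ψf p).2 - 1)) ∨
          ((ψf p).2 = (ψf q).2 ∧
            ∀ i : Fin n, ((ψf p).1 i ≠ (ψf q).1 i ↔ ((i : ℕ) : ZMod n) = (ψf p).2)) ) := by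
      rintro p q (⟨hx, hk⟩ | ⟨hk, hd⟩)
      · left
        refine ⟨funext fun i => by show xor (p.1 (σ i)) (c i) = xor (q.1 (σ i)) (c i); rw [hx], ?_⟩
        rcases hk with hk | hk
        · right; show s - q.2 = s - p.2 - 1; rw [hk]; ring
        · left; show s - q.2 = s - p.2 + 1; rw [hk]; ring
      · right
        refine ⟨by show s - p.2 = s - q.2; rw [hk], fun i => ?_⟩
        show (xor (p.1 (σ i)) (c i) ≠ xor (q.1 (σ i)) (c i)) ↔ ((i : ℕ) : ZMod n) = s - p.2
        rw [xor_ne_xor, hd (σ i), hσcast]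
        constructor
        · intro hh; rw [← hh]; ring
        · intro hh; rw [hh]; ring
    refine card_key (CCC n) hinv.toPerm ?_ (fun z => hinv z) u v hu
    intro p q hpq
    rw [CCC, SimpleGraph.fromRel_adj] at hpq ⊢
    exact ⟨fun hh => hpq.1 (hinv.injective hh), hpq.2.imp (hrel p q) (hrel q p)⟩
  · -- cube edge: u.2 = v.2, xor by a constant
    set c : Fin n → Bool := fun i => xor (u.1 i) (v.1 i) with hc
    set ψf : (Fin n → Bool) × ZMod n → (Fin n → Bool) × ZMod n :=
      fun z => (fun i => xor (z.1 i) (c i), z.2) with hψf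
    have hinv : Function.Involutive ψf := by
      intro z
      refine Prod.ext ?_ rfl
      funext i
      show xor (xor (z.1 i) (c i)) (c i) = z.1 i
      rw [xor_xor_cancel]
    have hu : ψf u = v := by
      refine Prod.ext ?_ h2
      funext i
      show xor (u.1 i) (xor (u.1 i) (v.1 i)) = v.1 i
      cases u.1 i <;> cases v.1 i <;> rfl
    have hrel : ∀ p q : (Fin n → Bool) × ZMod n,
        ((p.1 = q.1 ∧ (q.2 = p.2 + 1 ∨ q.2 = p.2 - 1)) ∨
          (p.2 = q.2 ∧ ∀ i : Fin n, (p.1 i ≠ q.1 i ↔ ((i : ℕ) : ZMod n) = p.2))) →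
        (((ψf p).1 = (ψf q).1 ∧ ((ψf q).2 = (ψf p).2 + 1 ∨ (ψf q).2 = (ψf p).2 - 1)) ∨
          ((ψf p).2 = (ψf q).2 ∧
            ∀ i : Fin n, ((ψf p).1 i ≠ (ψf q).1 i ↔ ((i : ℕ) : ZMod n) = (ψf p).2)) ) := by
      rintro p q (⟨hx, hk⟩ | ⟨hk, hd⟩)
      · left
        exact ⟨funext fun i => by show xor (p.1 i) (c i) = xor (q.1 i) (c i); rw [hx], hk⟩
      · right
        refine ⟨hk, fun i => ?_⟩
        show (xor (p.1 i) (c i) ≠ xor (q.1 i) (c i)) ↔ ((i : ℕ) : ZMod n) = p.2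
        rw [xor_ne_xor]
        exact hd i
    refine card_key (CCC n) hinv.toPerm ?_ (fun z => hinv z) u v hu
    intro p q hpq
    rw [CCC, SimpleGraph.fromRel_adj] at hpq ⊢
    exact ⟨fun hh => hpq.1 (hinv.injective hh), hpq.2.imp (hrel p q) (hrel q p)⟩
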